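/- Let G be a connected simple graph with vertex set {v₁, ..., vₙ} and define c(vᵢ) = 2^{i-1} for each i ∈ {1, ..., n}. Then for every simple graph G' on n vertices and every vertex assignment c' : V(G') → ℤ⁺, if S(G,c) = S(G',c') then G is isomorphic to G'. -/

import Mathlib

/-- The set of connected subgraph sums of `G` with vertex assignment `c`. -/
def connSums {V : Type*} [Fintype V] (G : SimpleGraph V) (c : V → ℕ) : Set ℕ :=
  {N | ∃ s : Finset V, s.Nonempty ∧ (G.induce (↑s : Set V)).Connected ∧ ∑ v ∈ s, c v = N}

open Finset

private lemma aux_sum_two_pow_lt (m : ℕ) : ∑ i ∈ range m, 2 ^ i < 2 ^ m := by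
  induction m with
  | zero => simp
  | succ m ih => rw [sum_range_succ, pow_succ]; omega

private lemma aux_connected_induce_singleton {V : Type*} (G : SimpleGraph V) (v : V) :
    (G.induce ({v} : Set V)).Connected := by
  refine (SimpleGraph.connected_iff _).mpr ⟨?_, ⟨⟨v, rfl⟩⟩⟩
  · intro x y
    have hxy : x = y := Subtype.ext (by
      have hx := x.2; have hy := y.2
      simp only [Set.mem_singleton_iff] at hx hy
      rw [hx, hy])
    exact hxy ▸ SimpleGraph.Reachable.refl x

private lemma aux_connected_induce_pair_iff {V : Type*} (G : SimpleGraph V) {a b : V}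
    (hab : a ≠ b) : (G.induce ({a, b} : Set V)).Connected ↔ G.Adj a b := by
  constructor
  · intro h
    have key : ∀ (x y : ({a, b} : Set V)) (_ : (G.induce ({a, b} : Set V)).Walk x y),
        x ≠ y → G.Adj a b := by
      intro x y w
      induction w with
      | nil => exact fun h' => absurd rfl h'
      | @cons u v _ huv _ _ =>
        intro _
        have h1 : G.Adj (u : V) (v : V) := huv
        have hu := u.2; have hv := v.2
        simp only [Set.mem_insert_iff, Set.mem_singleton_iff] at hu hv
        rcases hu with hu | hu <;> rcases hv with hv | hv
        · rw [hu, hv] at h1; exact absurd h1 (G.irrefl)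
        · rw [hu, hv] at h1; exact h1
        · rw [hu, hv] at h1; exact h1.symm
        · rw [hu, hv] at h1; exact absurd h1 (G.irrefl)
    have hr := h.preconnected ⟨a, Set.mem_insert a _⟩ ⟨b, Set.mem_insert_iff.2 (Or.inr rfl)⟩
    obtain ⟨w⟩ := hr
    exact key _ _ w (fun hEq => hab (congrArg Subtype.val hEq))
  · intro hadj
    have hedge : (G.induce ({a, b} : Set V)).Adj ⟨a, Set.mem_insert a _⟩
        ⟨b, Set.mem_insert_iff.2 (Or.inr rfl)⟩ := hadj
    refine (SimpleGraph.connected_iff _).mpr ⟨?_, ⟨⟨a, Set.mem_insert a _⟩⟩⟩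
    · rintro ⟨x, hx⟩ ⟨y, hy⟩
      simp only [Set.mem_insert_iff, Set.mem_singleton_iff] at hx hy
      rcases hx with rfl | rfl <;> rcases hy with rfl | rfl
      · exact SimpleGraph.Reachable.refl _
      · exact hedge.reachable
      · exact hedge.symm.reachable
      · exact SimpleGraph.Reachable.refl _

private lemma aux_decode {n : ℕ} (A B : Finset (Fin n))
    (h : ∑ i ∈ A, 2 ^ (i : ℕ) = ∑ i ∈ B, 2 ^ (i : ℕ)) : A = B := by
  classical
  have himg : A.image Fin.val = B.image Fin.val := by
    apply Finset.geomSum_injective (le_refl 2)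
    simp only
    rw [Finset.sum_image (fun x _ y _ h => Fin.val_injective h),
      Finset.sum_image (fun x _ y _ h => Fin.val_injective h)]
    exact h
  exact Finset.image_injective Fin.val_injective himg

private lemma aux_sum_union_le {α : Type*} [DecidableEq α] (A B : Finset α) (g : α → ℕ) :
    ∑ v ∈ A ∪ B, g v ≤ ∑ v ∈ A, g v + ∑ v ∈ B, g v := by
  have := Finset.sum_union_inter (s₁ := A) (s₂ := B) (f := g)
  omega

private lemma aux_sum_biUnion_le {ι α : Type*} [DecidableEq α] (I : Finset ι) (s : ι → Finset α)
    (g : α → ℕ) : ∑ v ∈ I.biUnion s, g v ≤ ∑ j ∈ I, ∑ v ∈ s j, g v := by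
  classical
  induction I using Finset.induction with
  | empty => simp
  | insert _ _ hj ih =>
    rename_i j I
    rw [Finset.biUnion_insert, Finset.sum_insert hj]
    exact (aux_sum_union_le _ _ g).trans (Nat.add_le_add_left ih _)

/-- If `G` is connected on vertices `v₁, …, vₙ` and `c(vᵢ) = 2^(i-1)`, then the
collection of connected subgraph sums determines `G` among all `n`-vertex graphs. -/
theorem stmt_3 (n : ℕ) (G : SimpleGraph (Fin n)) (hG : G.Connected)
    (c : Fin n → ℕ) (hc : ∀ i : Fin n, c i = 2 ^ (i : ℕ)) :
    ∀ (V' : Type) (_ : Fintype V') (G' : SimpleGraph V') (c' : V' → ℕ),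
      Fintype.card V' = n → (∀ v, 0 < c' v) →
      connSums G c = connSums G' c' → Nonempty (G ≃g G') := by
  intro V' _inst G' c' hcard hpos hS
  classical
  haveI : Nonempty (Fin n) := hG.nonempty
  -- each power 2^i is a connected subgraph sum of G
  have hmemS : ∀ i : Fin n, (2 : ℕ) ^ (i : ℕ) ∈ connSums G c := by
    intro i
    refine ⟨{i}, singleton_nonempty i, ?_, by rw [sum_singleton, hc]⟩
    rw [coe_singleton]
    exact aux_connected_induce_singleton G i
  have hS'mem : ∀ i : Fin n, (2 : ℕ) ^ (i : ℕ) ∈ connSums G' c' := fun i => hS ▸ hmemS i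
  choose s hsne hsconn hssum using hS'mem
  -- Hall condition
  have claim : ∀ I : Finset (Fin n), I.card ≤ (I.biUnion s).card := by
    intro I
    induction I using Finset.strongInduction with
    | _ I ih =>
      rcases I.eq_empty_or_nonempty with rfl | hI
      · simp
      · have hmI : I.max' hI ∈ I := I.max'_mem hI
        set m := I.max' hI with hm
        have hpriv : ∃ x ∈ s m, x ∉ (I.erase m).biUnion s := by
          by_contra hcon
          push_neg at hcon
          have h1 : (2 : ℕ) ^ (m : ℕ) ≤ ∑ v ∈ (I.erase m).biUnion s, c' v := by
            rw [← hssum m]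
            exact Finset.sum_le_sum_of_subset hcon
          have h2 : ∑ v ∈ (I.erase m).biUnion s, c' v ≤ ∑ j ∈ I.erase m, ∑ v ∈ s j, c' v :=
            aux_sum_biUnion_le _ _ _
          have h3 : ∑ j ∈ I.erase m, ∑ v ∈ s j, c' v = ∑ j ∈ I.erase m, 2 ^ (j : ℕ) := by
            exact Finset.sum_congr rfl fun j _ => hssum j
          have h4 : ∑ j ∈ I.erase m, 2 ^ (j : ℕ)
              = ∑ k ∈ (I.erase m).image Fin.val, 2 ^ k := by
            rw [Finset.sum_image (fun x _ y _ h => Fin.val_injective h)]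
          have h5 : (I.erase m).image Fin.val ⊆ range (m : ℕ) := by
            intro k hk
            simp only [Finset.mem_image] at hk
            obtain ⟨j, hj, rfl⟩ := hk
            have hjm : j ≠ m := (Finset.mem_erase.1 hj).1
            have hjle : j ≤ m := I.le_max' j (Finset.mem_erase.1 hj).2
            exact Finset.mem_range.2 (lt_of_le_of_ne (Fin.le_iff_val_le_val.1 hjle)
              (fun hEq => hjm (Fin.val_injective hEq)))
          have h6 : ∑ k ∈ (I.erase m).image Fin.val, 2 ^ k ≤ ∑ k ∈ range (m : ℕ), 2 ^ k :=
            Finset.sum_le_sum_of_subset h5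
          have := aux_sum_two_pow_lt (m : ℕ)
          omega
        obtain ⟨x, hxs, hxB⟩ := hpriv
        have hErase : (I.erase m).card ≤ ((I.erase m).biUnion s).card :=
          ih _ (Finset.erase_ssubset hmI)
        have hins : insert x ((I.erase m).biUnion s) ⊆ I.biUnion s := by
          intro y hy
          rcases Finset.mem_insert.1 hy with rfl | hy
          · exact Finset.mem_biUnion.2 ⟨m, hmI, hxs⟩
          · exact Finset.biUnion_subset_biUnion_of_subset_left s (Finset.erase_subset m I) hy
        have hcardins : ((I.erase m).biUnion s).card + 1 ≤ (I.biUnion s).card := by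
          rw [← Finset.card_insert_of_notMem hxB]
          exact Finset.card_le_card hins
        have := Finset.card_erase_add_one hmI
        omega
  -- Hall's theorem
  obtain ⟨f, hfinj, hfmem⟩ :=
    (Finset.all_card_le_biUnion_card_iff_exists_injective s).1 claim
  have hbij : Function.Bijective f :=
    (Fintype.bijective_iff_injective_and_card f).2 ⟨hfinj, by simp [hcard]⟩
  -- total sum is a connected subgraph sum of G
  have hMG : (∑ i : Fin n, 2 ^ (i : ℕ)) ∈ connSums G c := by
    refine ⟨univ, univ_nonempty, ?_, by simp [hc]⟩
    rw [coe_univ]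
    exact (SimpleGraph.induceUnivIso G).connected_iff.2 hG
  obtain ⟨T, hTne, hTconn, hTsum⟩ := hS ▸ hMG
  -- squeeze
  have hW1 : (∑ i : Fin n, 2 ^ (i : ℕ)) ≤ ∑ v : V', c' v := by
    rw [← hTsum]
    exact Finset.sum_le_sum_of_subset (Finset.subset_univ T)
  have hW2 : ∑ i : Fin n, c' (f i) = ∑ v : V', c' v :=
    Fintype.sum_bijective f hbij _ _ (fun i => rfl)
  have hle : ∀ i : Fin n, c' (f i) ≤ 2 ^ (i : ℕ) := by
    intro i
    rw [← hssum i]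
    exact Finset.single_le_sum (fun _ _ => Nat.zero_le _) (hfmem i)
  have hsumle : ∑ i : Fin n, c' (f i) ≤ ∑ i : Fin n, 2 ^ (i : ℕ) :=
    Finset.sum_le_sum fun i _ => hle i
  have heq : ∑ i : Fin n, c' (f i) = ∑ i : Fin n, 2 ^ (i : ℕ) := by omega
  have hfix : ∀ i : Fin n, c' (f i) = 2 ^ (i : ℕ) := by
    intro i
    exact (Finset.sum_eq_sum_iff_of_le fun i _ => hle i).1 heq i (mem_univ i)
  -- decoding realizers on the G' side
  have hdecode' : ∀ (t : Finset V') (A : Finset (Fin n)),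
      ∑ v ∈ t, c' v = ∑ i ∈ A, 2 ^ (i : ℕ) → t = A.image f := by
    intro t A ht
    set e : Fin n ≃ V' := Equiv.ofBijective f hbij with he
    have himg : t = (t.image e.symm).image f := by
      rw [Finset.image_image]
      have : (f ∘ ⇑e.symm) = id := by
        funext v
        exact e.apply_symm_apply v
      rw [this, Finset.image_id]
    have hsum2 : ∑ i ∈ t.image e.symm, 2 ^ (i : ℕ) = ∑ i ∈ A, 2 ^ (i : ℕ) := by
      rw [← ht]
      have : ∑ v ∈ t, c' v = ∑ i ∈ t.image e.symm, c' (f i) := by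
        nth_rewrite 1 [himg]
        rw [Finset.sum_image (fun x _ y _ h => hfinj h)]
      rw [this]
      exact Finset.sum_congr rfl fun i _ => (hfix i).symm
    rw [aux_decode _ _ hsum2] at himg
    exact himg
  -- build the isomorphism
  refine ⟨⟨Equiv.ofBijective f hbij, ?_⟩⟩
  intro a b
  simp only [Equiv.ofBijective_apply]
  constructor
  · -- G'.Adj (f a) (f b) → G.Adj a b
    intro h'
    have hfab : f a ≠ f b := h'.ne
    have hab : a ≠ b := fun hEq => hfab (congrArg f hEq)
    have hmem' : (2 : ℕ) ^ (a : ℕ) + 2 ^ (b : ℕ) ∈ connSums G' c' := by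
      refine ⟨{f a, f b}, Finset.insert_nonempty _ _, ?_, ?_⟩
      · rw [Finset.coe_insert, Finset.coe_singleton]
        exact (aux_connected_induce_pair_iff G' hfab).2 h'
      · rw [Finset.sum_pair hfab, hfix a, hfix b]
    obtain ⟨t, htne, htconn, htsum⟩ := hS.symm ▸ hmem'
    have htAB : t = {a, b} := by
      have : ∑ i ∈ t, c i = ∑ i ∈ ({a, b} : Finset (Fin n)), 2 ^ (i : ℕ) := by
        rw [htsum, Finset.sum_pair hab]
      have hc2 : ∑ i ∈ t, 2 ^ (i : ℕ) = ∑ i ∈ ({a, b} : Finset (Fin n)), 2 ^ (i : ℕ) := by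
        rw [← this]
        exact Finset.sum_congr rfl fun i _ => (hc i).symm
      exact aux_decode _ _ hc2
    rw [htAB] at htconn
    rw [Finset.coe_insert, Finset.coe_singleton] at htconn
    exact (aux_connected_induce_pair_iff G hab).1 htconn
  · -- G.Adj a b → G'.Adj (f a) (f b)
    intro h
    have hab : a ≠ b := h.ne
    have hfab : f a ≠ f b := fun hEq => hab (hfinj hEq)
    have hmem : (2 : ℕ) ^ (a : ℕ) + 2 ^ (b : ℕ) ∈ connSums G c := by
      refine ⟨{a, b}, Finset.insert_nonempty _ _, ?_, ?_⟩
      · rw [Finset.coe_insert, Finset.coe_singleton]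
        exact (aux_connected_induce_pair_iff G hab).2 h
      · rw [Finset.sum_pair hab, hc a, hc b]
    obtain ⟨t, htne, htconn, htsum⟩ := hS ▸ hmem
    have htsum' : ∑ v ∈ t, c' v = ∑ i ∈ ({a, b} : Finset (Fin n)), 2 ^ (i : ℕ) := by
      rw [htsum, Finset.sum_pair hab]
    have htAB : t = ({a, b} : Finset (Fin n)).image f := hdecode' t _ htsum'
    rw [Finset.image_insert, Finset.image_singleton] at htAB
    rw [htAB, Finset.coe_insert, Finset.coe_singleton] at htconn
    exact (aux_connected_induce_pair_iff G' hfab).1 htconn
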